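/- Let K₁, K₂ be proper cones in ℝⁿ and let S be an invertible linear map on ℝⁿ with S(K₁) ⊆ K₂. If a matrix A is K₁-semipositive, then B = S A S⁻¹ is K₂-semipositive. Conversely, if K₁ and K₂ are self-dual and C is K₂-semipositive, then there exists a K₁-semipositive matrix A such that C = (Sᵗ)⁻¹ A Sᵗ. -/

import Mathlib

open Matrix

/-- The dual cone of a set in `ℝⁿ` (with the standard inner product). -/
def dualCone {n : ℕ} (K : Set (Fin n → ℝ)) : Set (Fin n → ℝ) :=
  {y | ∀ x ∈ K, 0 ≤ y ⬝ᵥ x}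

/-- A proper cone in `ℝⁿ`: a topologically closed, pointed convex cone with
nonempty interior. -/
def IsProperCone {n : ℕ} (K : Set (Fin n → ℝ)) : Prop :=
  IsClosed K ∧ (∀ x ∈ K, ∀ y ∈ K, x + y ∈ K) ∧
    (∀ (c : ℝ), 0 ≤ c → ∀ x ∈ K, c • x ∈ K) ∧
    (∀ x ∈ K, -x ∈ K → x = 0) ∧ (interior K).Nonempty

/-- `A` is `K`-semipositive: there is `x ∈ K°` with `Ax ∈ K°`. -/
def Semipositive {n : ℕ} (K : Set (Fin n → ℝ)) (A : Matrix (Fin n) (Fin n) ℝ) : Prop :=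
  ∃ x ∈ interior K, A *ᵥ x ∈ interior K

lemma mulVec_continuous' {n : ℕ} (S : Matrix (Fin n) (Fin n) ℝ) :
    Continuous fun x : Fin n → ℝ => S *ᵥ x := by
  have := (Matrix.mulVecLin S).continuous_of_finiteDimensional
  exact this

/-- An invertible matrix mapping `K₁` into `K₂` maps `interior K₁` into `interior K₂`. -/
lemma map_interior {n : ℕ} (S : Matrix (Fin n) (Fin n) ℝ) (hSinv : IsUnit S)
    (K₁ K₂ : Set (Fin n → ℝ)) (h : ∀ x ∈ K₁, S *ᵥ x ∈ K₂) :
    ∀ x ∈ interior K₁, S *ᵥ x ∈ interior K₂ := by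
  have hdet : IsUnit S.det := (Matrix.isUnit_iff_isUnit_det S).mp hSinv
  have hinv : S⁻¹ * S = 1 := Matrix.nonsing_inv_mul S hdet
  intro x hx
  have himg : (fun y => S *ᵥ y) '' interior K₁ = (fun y => S⁻¹ *ᵥ y) ⁻¹' interior K₁ := by
    ext z
    constructor
    · rintro ⟨w, hw, rfl⟩
      simpa [Matrix.mulVec_mulVec, hinv] using hw
    · intro hz
      exact ⟨S⁻¹ *ᵥ z, hz, by
        have : S * S⁻¹ = 1 := Matrix.mul_nonsing_inv S hdet
        simp [Matrix.mulVec_mulVec, this]⟩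
  have hopen : IsOpen ((fun y => S *ᵥ y) '' interior K₁) := by
    rw [himg]
    exact isOpen_interior.preimage (mulVec_continuous' S⁻¹)
  have hsub : (fun y => S *ᵥ y) '' interior K₁ ⊆ K₂ := by
    rintro z ⟨w, hw, rfl⟩
    exact h w (interior_subset hw)
  have : (fun y => S *ᵥ y) '' interior K₁ ⊆ interior K₂ :=
    interior_maximal hsub hopen
  exact this ⟨x, hx, rfl⟩

theorem stmt_2 {n : ℕ} (K₁ K₂ : Set (Fin n → ℝ))
    (hK₁ : IsProperCone K₁) (hK₂ : IsProperCone K₂)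
    (S : Matrix (Fin n) (Fin n) ℝ) (hSinv : IsUnit S) (hS : ∀ x ∈ K₁, S *ᵥ x ∈ K₂) :
    (∀ A : Matrix (Fin n) (Fin n) ℝ, Semipositive K₁ A → Semipositive K₂ (S * A * S⁻¹)) ∧
    (dualCone K₁ = K₁ → dualCone K₂ = K₂ →
      ∀ C : Matrix (Fin n) (Fin n) ℝ, Semipositive K₂ C →
        ∃ A : Matrix (Fin n) (Fin n) ℝ, Semipositive K₁ A ∧ C = (Sᵀ)⁻¹ * A * Sᵀ) := by
  have hdet : IsUnit S.det := (Matrix.isUnit_iff_isUnit_det S).mp hSinv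
  have hinv : S⁻¹ * S = 1 := Matrix.nonsing_inv_mul S hdet
  constructor
  · rintro A ⟨x, hx, hAx⟩
    refine ⟨S *ᵥ x, map_interior S hSinv K₁ K₂ hS x hx, ?_⟩
    have : (S * A * S⁻¹) *ᵥ (S *ᵥ x) = S *ᵥ (A *ᵥ x) := by
      rw [Matrix.mulVec_mulVec]
      rw [show S * A * S⁻¹ * S = S * A by rw [Matrix.mul_assoc, hinv, Matrix.mul_one]]
      rw [← Matrix.mulVec_mulVec]
    rw [this]
    exact map_interior S hSinv K₁ K₂ hS _ hAx
  · intro hK₁sd hK₂sd C ⟨y, hy, hCy⟩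
    have hTdet : IsUnit Sᵀ.det := by rwa [Matrix.det_transpose]
    have hTunit : IsUnit Sᵀ := (Matrix.isUnit_iff_isUnit_det Sᵀ).mpr hTdet
    have hTinv : (Sᵀ)⁻¹ * Sᵀ = 1 := Matrix.nonsing_inv_mul Sᵀ hTdet
    have hTinv' : Sᵀ * (Sᵀ)⁻¹ = 1 := Matrix.mul_nonsing_inv Sᵀ hTdet
    -- Sᵀ maps K₂ into K₁
    have hST : ∀ z ∈ K₂, Sᵀ *ᵥ z ∈ K₁ := by
      intro z hz
      rw [← hK₁sd]
      intro x hx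
      have hz' : z ∈ dualCone K₂ := by rw [hK₂sd]; exact hz
      have := hz' (S *ᵥ x) (hS x hx)
      calc (0:ℝ) ≤ z ⬝ᵥ (S *ᵥ x) := this
        _ = (Sᵀ *ᵥ z) ⬝ᵥ x := by
            rw [Matrix.dotProduct_mulVec, Matrix.mulVec_transpose]
    refine ⟨Sᵀ * C * (Sᵀ)⁻¹, ⟨Sᵀ *ᵥ y, map_interior Sᵀ hTunit K₂ K₁ hST y hy, ?_⟩, ?_⟩
    · have : (Sᵀ * C * (Sᵀ)⁻¹) *ᵥ (Sᵀ *ᵥ y) = Sᵀ *ᵥ (C *ᵥ y) := by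
        rw [Matrix.mulVec_mulVec]
        rw [show Sᵀ * C * (Sᵀ)⁻¹ * Sᵀ = Sᵀ * C by rw [Matrix.mul_assoc, hTinv, Matrix.mul_one]]
        rw [← Matrix.mulVec_mulVec]
      rw [this]
      exact map_interior Sᵀ hTunit K₂ K₁ hST _ hCy
    · rw [Matrix.mul_assoc, Matrix.mul_assoc, Matrix.mul_assoc, hTinv, Matrix.mul_one,
        ← Matrix.mul_assoc, hTinv, Matrix.one_mul]
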